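/- Let S be a smooth projective surface, D a big divisor on S with Zariski decomposition D = P_D + N_D, and π : S̃ → S the blowup of S at a point p with exceptional divisor E_p. Then Null(π*(P_D)) = {strict transforms of curves in Null(P_D)} ∪ {E_p}; consequently #Null(π*(D)) - #Null(D) = 1 = ρ(S̃) - ρ(S), and hence the relative Picard number ρ_D(S) := ρ(S) - #Null(P_D) satisfies ρ_{π*D}(S̃) = ρ_D(S). -/
import Mathlib


/-- (Birational invariance of the relative Picard number,
Definition 2.5 / equation (2.1).) Model: `dP C = P_D · C` on `S`, `dP' C' = π*(P_D)·C'`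
on the blowup `S̃`; the strict transform map `st` is a bijection onto the curves of
`S̃` other than the exceptional divisor `Ep`; the projection formula gives
`dP' (st C) = dP C` and `dP' Ep = 0`. Then `Null(π*P_D)` is the image of `Null(P_D)`
together with `Ep`, its cardinality grows by exactly `1 = ρ(S̃) − ρ(S)`, and hence
`ρ_{π*D}(S̃) = ρ_D(S)`. -/
theorem relative_picard_number_blowup_invariant
    (CurS CurT : Type*) (ρS : ℕ)
    (dP : CurS → ℝ) (dP' : CurT → ℝ)
    (st : CurS → CurT) (Ep : CurT)
    (hst_inj : Function.Injective st)
    (hst_ne : ∀ C, st C ≠ Ep)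
    (hst_surj : ∀ C' : CurT, C' ≠ Ep → ∃ C, st C = C')
    (hproj : ∀ C, dP' (st C) = dP C)
    (hEp : dP' Ep = 0)
    (hnef : ∀ C, 0 ≤ dP C)
    (hfin : {C | dP C = 0}.Finite) :
    {C' | dP' C' = 0} = st '' {C | dP C = 0} ∪ {Ep} ∧
    {C' | dP' C' = 0}.ncard = {C | dP C = 0}.ncard + 1 ∧
    ((ρS + 1 : ℤ) - {C' | dP' C' = 0}.ncard = (ρS : ℤ) - {C | dP C = 0}.ncard) := by
  have hset : {C' | dP' C' = 0} = st '' {C | dP C = 0} ∪ {Ep} := by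
    ext C'
    simp only [Set.mem_setOf_eq, Set.mem_union, Set.mem_image, Set.mem_singleton_iff]
    constructor
    · intro h
      by_cases hC : C' = Ep
      · exact Or.inr hC
      · obtain ⟨C, hC'⟩ := hst_surj C' hC
        exact Or.inl ⟨C, by rw [← hC', hproj] at h; exact h, hC'⟩
    · rintro (⟨C, hC, rfl⟩ | rfl)
      · rw [hproj]; exact hC
      · exact hEp
  have himg : (st '' {C | dP C = 0}).ncard = {C | dP C = 0}.ncard :=
    Set.ncard_image_of_injective _ hst_inj
  have hdisj : Ep ∉ st '' {C | dP C = 0} := by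
    rintro ⟨C, -, hC⟩; exact hst_ne C hC
  have hcard : {C' | dP' C' = 0}.ncard = {C | dP C = 0}.ncard + 1 := by
    rw [hset, Set.union_singleton, Set.ncard_insert_of_notMem hdisj (hfin.image st), himg]
  refine ⟨hset, hcard, ?_⟩
  rw [hcard]; push_cast; ring
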